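/- In R = MvPowerSeries (Fin m) ℚ, the power series Td′ · (Σ_{r=0}^m (−1)^r · ch_r) agrees in total degree m with (m/2) · e_m. -/

import Mathlib

open Finset

noncomputable section

/-- The element of `MvPowerSeries (Fin m) ℚ` obtained by substituting the variable `X j`
into a one-variable formal power series `f`. -/
def substAt {m : ℕ} (j : Fin m) (f : PowerSeries ℚ) : MvPowerSeries (Fin m) ℚ :=
  fun n => if n.support ⊆ {j} then PowerSeries.coeff (R := ℚ) (n j) f else 0

/-- The one-variable power series `exp (−X) = Σ_{n ≥ 0} (−X)^n / n!`. -/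
def expNeg : PowerSeries ℚ := PowerSeries.mk fun n => (-1) ^ n / n.factorial

/-- `ch m r = Σ_{S ⊆ Fin m, |S| = r} ∏_{j ∈ S} exp (−X j)`, the `r`-th Chern character
term of the exterior powers, written in Chern roots. -/
def ch (m : ℕ) (r : ℕ) : MvPowerSeries (Fin m) ℚ :=
  ∑ S ∈ Finset.powersetCard r (Finset.univ : Finset (Fin m)),
    ∏ j ∈ S, substAt j expNeg

/-- `esymm m k = Σ_{S ⊆ Fin m, |S| = k} ∏_{j ∈ S} X j`, the `k`-th elementary symmetric
polynomial of the variables, as a multivariate power series. -/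
def esymm (m : ℕ) (k : ℕ) : MvPowerSeries (Fin m) ℚ :=
  ∑ S ∈ Finset.powersetCard k (Finset.univ : Finset (Fin m)),
    ∏ j ∈ S, MvPowerSeries.X j

/-- The Todd class `Td = ∏_{j=1}^m φ(X_j)` written in Chern roots, where `φ` is the
Todd series `X/(1 − e^{−X})`. -/
def Td (m : ℕ) (φ : PowerSeries ℚ) : MvPowerSeries (Fin m) ℚ :=
  ∏ j : Fin m, substAt j φ

/-- `Td′ = Σ_{j=1}^m φ′(X_j) · ∏_{k ≠ j} φ(X_k)`, the class
`Td′(A) = ∂/∂t Td(A + t·Id)|_{t=0}` written in Chern roots. -/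
def Td' (m : ℕ) (φ : PowerSeries ℚ) : MvPowerSeries (Fin m) ℚ :=
  ∑ j : Fin m, substAt j (PowerSeries.derivative (R := ℚ) φ) *
    ∏ k ∈ Finset.univ.erase j, substAt k φ

/-- Two multivariate power series agree in total degree `≤ p`: their coefficients at every
multi-exponent of total degree `≤ p` coincide. -/
def AgreeUpTo (m p : ℕ) (F G : MvPowerSeries (Fin m) ℚ) : Prop :=
  ∀ n : Fin m →₀ ℕ, (∑ j, n j) ≤ p → MvPowerSeries.coeff (R := ℚ) n F = MvPowerSeries.coeff (R := ℚ) n G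

/-- Two multivariate power series agree in total degree `p`: their coefficients at every
multi-exponent of total degree `p` coincide. -/
def AgreeAt (m p : ℕ) (F G : MvPowerSeries (Fin m) ℚ) : Prop :=
  ∀ n : Fin m →₀ ℕ, (∑ j, n j) = p → MvPowerSeries.coeff (R := ℚ) n F = MvPowerSeries.coeff (R := ℚ) n G

lemma coeff_substAt {m : ℕ} (j : Fin m) (f : PowerSeries ℚ) (n : Fin m →₀ ℕ) :
    MvPowerSeries.coeff (R := ℚ) n (substAt j f)
      = if n.support ⊆ {j} then PowerSeries.coeff (R := ℚ) (n j) f else 0 := rfl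

lemma substAt_one {m : ℕ} (j : Fin m) : substAt j 1 = 1 := by
  classical
  ext n
  rw [coeff_substAt, MvPowerSeries.coeff_one, PowerSeries.coeff_one]
  by_cases h : n.support ⊆ {j}
  · rw [if_pos h]
    have hn : n = Finsupp.single j (n j) := Finsupp.support_subset_singleton.mp h
    by_cases h0 : n j = 0
    · rw [if_pos h0, if_pos (by rw [hn, h0, Finsupp.single_zero])]
    · rw [if_neg h0, if_neg (fun hn0 => h0 (by simp [hn0]))]
  · rw [if_neg h, if_neg (fun hn0 => h (by simp [hn0]))]

lemma substAt_mul {m : ℕ} (j : Fin m) (f g : PowerSeries ℚ) :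
    substAt j (f * g) = substAt j f * substAt j g := by
  classical
  ext n
  rw [MvPowerSeries.coeff_mul, coeff_substAt]
  by_cases h : n.support ⊆ {j}
  · have hn : n = Finsupp.single j (n j) := Finsupp.support_subset_singleton.mp h
    rw [if_pos h, PowerSeries.coeff_mul]
    conv_rhs => rw [hn, Finsupp.antidiagonal_single, Finset.sum_map]
    apply Finset.sum_congr rfl
    intro p _
    simp only [Function.Embedding.coe_prodMap, Function.Embedding.coeFn_mk, Prod.map_apply,
      coeff_substAt, Prod.map_fst, Prod.map_snd,
      if_pos Finsupp.support_single_subset, Finsupp.single_eq_same]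
  · rw [if_neg h]
    symm
    apply Finset.sum_eq_zero
    intro p hp
    rw [coeff_substAt, coeff_substAt]
    by_cases h1 : p.1.support ⊆ {j}
    · by_cases h2 : p.2.support ⊆ {j}
      · exfalso
        apply h
        have hpn : p.1 + p.2 = n := Finset.HasAntidiagonal.mem_antidiagonal.mp hp
        rw [← hpn]
        exact (Finsupp.support_add).trans (Finset.union_subset h1 h2)
      · rw [if_neg h2, mul_zero]
    · rw [if_neg h1, zero_mul]

lemma substAt_add {m : ℕ} (j : Fin m) (f g : PowerSeries ℚ) :
    substAt j (f + g) = substAt j f + substAt j g := by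
  ext n
  rw [map_add, coeff_substAt, coeff_substAt, coeff_substAt]
  split_ifs with h
  · rw [map_add]
  · rw [add_zero]

def substAtHom {m : ℕ} (j : Fin m) : PowerSeries ℚ →+* MvPowerSeries (Fin m) ℚ where
  toFun := substAt j
  map_one' := substAt_one j
  map_mul' := substAt_mul j
  map_zero' := by
    ext n
    rw [coeff_substAt]
    simp
  map_add' := substAt_add j

@[simp] lemma substAtHom_apply {m : ℕ} (j : Fin m) (f : PowerSeries ℚ) :
    substAtHom j f = substAt j f := rfl

lemma substAt_one_sub {m : ℕ} (j : Fin m) (f : PowerSeries ℚ) :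
    substAt j (1 - f) = 1 - substAt j f := by
  have := map_sub (substAtHom j) 1 f
  rw [substAtHom_apply, substAtHom_apply, substAtHom_apply, substAt_one] at this
  exact this

lemma substAt_X {m : ℕ} (j : Fin m) :
    substAt j PowerSeries.X = MvPowerSeries.X j := by
  classical
  ext n
  rw [coeff_substAt, MvPowerSeries.coeff_X, PowerSeries.coeff_X]
  by_cases hn : n = Finsupp.single j 1
  · subst hn
    rw [if_pos Finsupp.support_single_subset, if_pos (by simp), if_pos rfl]
  · rw [if_neg hn]
    by_cases h : n.support ⊆ {j}
    · rw [if_pos h, if_neg]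
      intro h1
      exact hn ((Finsupp.support_subset_singleton.mp h).trans (by rw [h1]))
    · rw [if_neg h]

lemma coeff_expNeg (n : ℕ) :
    PowerSeries.coeff (R := ℚ) n expNeg = (-1) ^ n / n.factorial := PowerSeries.coeff_mk n _

lemma derivative_expNeg :
    PowerSeries.derivative (R := ℚ) expNeg = -expNeg := by
  ext n
  rw [PowerSeries.coeff_derivative, map_neg, coeff_expNeg, coeff_expNeg]
  have h1 : (n.factorial : ℚ) ≠ 0 := Nat.cast_ne_zero.mpr n.factorial_ne_zero
  have h2 : ((n : ℚ) + 1) ≠ 0 := by positivity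
  rw [pow_succ, Nat.factorial_succ]
  push_cast
  field_simp

lemma one_var_key (φ : PowerSeries ℚ) (hφ : φ * (1 - expNeg) = PowerSeries.X) :
    PowerSeries.derivative (R := ℚ) φ * (1 - expNeg) = 1 - φ * expNeg := by
  have h := congrArg (PowerSeries.derivative (R := ℚ)) hφ
  rw [Derivation.leibniz, map_sub, Derivation.map_one_eq_zero, derivative_expNeg,
    PowerSeries.derivative_X, smul_eq_mul, smul_eq_mul] at h
  linear_combination h

lemma coeff_phi_zero (φ : PowerSeries ℚ) (hφ : φ * (1 - expNeg) = PowerSeries.X) :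
    PowerSeries.coeff (R := ℚ) 0 φ = 1 := by
  have h := congrArg (PowerSeries.coeff (R := ℚ) 1) hφ
  rw [PowerSeries.coeff_mul, Finset.Nat.sum_antidiagonal_eq_sum_range_succ_mk,
    Finset.sum_range_succ, Finset.sum_range_succ, Finset.sum_range_zero,
    PowerSeries.coeff_X] at h
  simp only [map_sub, PowerSeries.coeff_one, coeff_expNeg] at h
  norm_num at h
  simpa using h

lemma coeff_phi_one (φ : PowerSeries ℚ) (hφ : φ * (1 - expNeg) = PowerSeries.X) :
    PowerSeries.coeff (R := ℚ) 1 φ = 1 / 2 := by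
  have h := congrArg (PowerSeries.coeff (R := ℚ) 2) hφ
  rw [PowerSeries.coeff_mul, Finset.Nat.sum_antidiagonal_eq_sum_range_succ_mk,
    Finset.sum_range_succ, Finset.sum_range_succ, Finset.sum_range_succ, Finset.sum_range_zero,
    PowerSeries.coeff_X] at h
  simp only [map_sub, PowerSeries.coeff_one, coeff_expNeg] at h
  rw [show ((2:ℕ) - 0) = 2 from rfl, show ((2:ℕ) - 1) = 1 from rfl] at h
  rw [coeff_phi_zero φ hφ] at h
  norm_num [Nat.factorial] at h
  linarith

lemma coeff_g_zero (φ : PowerSeries ℚ) (hφ : φ * (1 - expNeg) = PowerSeries.X) :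
    PowerSeries.coeff (R := ℚ) 0 (1 - φ * expNeg) = 0 := by
  have h0 := coeff_phi_zero φ hφ
  rw [PowerSeries.coeff_zero_eq_constantCoeff] at h0 ⊢
  rw [map_sub, map_one, map_mul, h0, one_mul]
  have : (PowerSeries.constantCoeff (R := ℚ)) expNeg = 1 := by
    rw [← PowerSeries.coeff_zero_eq_constantCoeff, coeff_expNeg]; norm_num
  rw [this]; norm_num

lemma coeff_g_one (φ : PowerSeries ℚ) (hφ : φ * (1 - expNeg) = PowerSeries.X) :
    PowerSeries.coeff (R := ℚ) 1 (1 - φ * expNeg) = 1 / 2 := by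
  rw [map_sub, PowerSeries.coeff_mul, Finset.Nat.sum_antidiagonal_eq_sum_range_succ_mk,
    Finset.sum_range_succ, Finset.sum_range_succ, Finset.sum_range_zero]
  have h0 := coeff_phi_zero φ hφ
  have h1 := coeff_phi_one φ hφ
  simp only [PowerSeries.coeff_one, coeff_expNeg] at *
  rw [show ((1:ℕ) - 0) = 1 from rfl, show ((1:ℕ) - 1) = 0 from rfl]
  rw [h0, h1]
  norm_num [Nat.factorial]

lemma prod_X_eq_monomial {m : ℕ} (s : Finset (Fin m)) :
    ∏ k ∈ s, (MvPowerSeries.X k : MvPowerSeries (Fin m) ℚ)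
      = MvPowerSeries.monomial (R := ℚ) (∑ k ∈ s, Finsupp.single k 1) 1 := by
  classical
  induction s using Finset.induction with
  | empty => simp [MvPowerSeries.monomial_zero_one]
  | @insert a s ha ih =>
    rw [Finset.prod_insert ha, Finset.sum_insert ha, ih, MvPowerSeries.X_def,
      MvPowerSeries.monomial_mul_monomial, one_mul]


lemma alt_sum_ch (m : ℕ) :
    (∑ r ∈ Finset.range (m + 1), (-1 : MvPowerSeries (Fin m) ℚ) ^ r * ch m r)
      = ∏ j : Fin m, ((1 : MvPowerSeries (Fin m) ℚ) - substAt j expNeg) := by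
  classical
  symm
  have hfactor : ∀ j : Fin m, (1 : MvPowerSeries (Fin m) ℚ) - substAt j expNeg
      = -substAt j expNeg + 1 := fun j => by ring
  rw [Finset.prod_congr rfl fun j _ => hfactor j, Finset.prod_add,
    Finset.powerset_card_disjiUnion]
  erw [Finset.sum_disjiUnion]
  rw [show (Finset.univ : Finset (Fin m)).card = m from Finset.card_fin m]
  refine Finset.sum_congr rfl fun r _ => ?_
  rw [ch, Finset.mul_sum]
  refine Finset.sum_congr rfl fun t ht => ?_
  have hcard : t.card = r := (Finset.mem_powersetCard.mp ht).2
  rw [Finset.prod_const_one, mul_one]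
  calc ∏ j ∈ t, -substAt j expNeg
      = ∏ j ∈ t, (-1 : MvPowerSeries (Fin m) ℚ) * substAt j expNeg := by
        refine Finset.prod_congr rfl fun j _ => by ring
    _ = (-1 : MvPowerSeries (Fin m) ℚ) ^ r * ∏ j ∈ t, substAt j expNeg := by
        rw [Finset.prod_mul_distrib, Finset.prod_const, hcard]

/-- `Td′ · (Σ_{r=0}^m (−1)^r · ch_r)` agrees in total degree `m` with `(m/2) · e_m`. -/
theorem td'_mul_alternating_sum_ch (m : ℕ) (φ : PowerSeries ℚ)
    (hφ : φ * (1 - expNeg) = PowerSeries.X) :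
    AgreeAt m m
      (Td' m φ * ∑ r ∈ Finset.range (m + 1),
        (-1 : MvPowerSeries (Fin m) ℚ) ^ r * ch m r)
      (MvPowerSeries.C (σ := Fin m) (R := ℚ) ((m : ℚ) / 2) * esymm m m) := by
  classical
  set d : Fin m → (Fin m →₀ ℕ) :=
    fun j => ∑ k ∈ Finset.univ.erase j, Finsupp.single k 1 with hd
  set ones : Fin m →₀ ℕ := ∑ k : Fin m, Finsupp.single k 1 with hones
  have hones_apply : ∀ i, ones i = 1 := by
    intro i
    rw [hones, Finsupp.finset_sum_apply]
    simp [Finsupp.single_apply]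
  have hd_apply : ∀ j i, d j i = if i = j then 0 else 1 := by
    intro j i
    rw [hd, Finsupp.finset_sum_apply]
    by_cases h : i = j
    · subst h
      rw [if_pos rfl]
      apply Finset.sum_eq_zero
      intro k hk
      rw [Finsupp.single_apply, if_neg (Finset.ne_of_mem_erase hk)]
    · rw [if_neg h]
      rw [Finset.sum_eq_single i]
      · simp
      · intro k _ hk; rw [Finsupp.single_apply, if_neg hk]
      · intro hi; exact absurd (Finset.mem_erase.mpr ⟨h, Finset.mem_univ i⟩) hi
  -- rewrite the left factor
  have hTd' : Td' m φ * ∏ k : Fin m, ((1 : MvPowerSeries (Fin m) ℚ) - substAt k expNeg)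
      = ∑ j : Fin m, substAt j (1 - φ * expNeg) * MvPowerSeries.monomial (R := ℚ) (d j) 1 := by
    rw [Td', Finset.sum_mul]
    refine Finset.sum_congr rfl fun j _ => ?_
    rw [← Finset.mul_prod_erase Finset.univ _ (Finset.mem_univ j), mul_mul_mul_comm]
    congr 1
    · rw [← one_var_key φ hφ, substAt_mul, substAt_one_sub]
    · rw [hd, ← prod_X_eq_monomial, ← Finset.prod_mul_distrib]
      refine Finset.prod_congr rfl fun k _ => ?_
      rw [← substAt_one_sub, ← substAt_mul, hφ, substAt_X]
  have hesymm : esymm m m = MvPowerSeries.monomial (R := ℚ) ones 1 := by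
    have hp : Finset.powersetCard m (Finset.univ : Finset (Fin m))
        = {(Finset.univ : Finset (Fin m))} := by
      simpa using Finset.powersetCard_self (Finset.univ : Finset (Fin m))
    rw [esymm, hp, Finset.sum_singleton, prod_X_eq_monomial, hones]
  intro n hn
  rw [alt_sum_ch, hTd', hesymm, map_sum, MvPowerSeries.coeff_C_mul,
    MvPowerSeries.coeff_monomial]
  by_cases hno : n = ones
  · subst hno
    rw [if_pos rfl, mul_one]
    have hterm : ∀ j : Fin m,
        MvPowerSeries.coeff (R := ℚ) ones (substAt j (1 - φ * expNeg)
          * MvPowerSeries.monomial (R := ℚ) (d j) 1) = 1 / 2 := by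
      intro j
      rw [MvPowerSeries.coeff_mul_monomial, if_pos, mul_one]
      · have hsub : ones - d j = Finsupp.single j 1 := by
          ext i
          rw [Finsupp.tsub_apply, hones_apply, hd_apply, Finsupp.single_apply]
          by_cases h : i = j
          · simp [h]
          · simp [h, Ne.symm h]
        rw [hsub, coeff_substAt, if_pos Finsupp.support_single_subset,
          Finsupp.single_eq_same, coeff_g_one φ hφ]
      · intro i
        rw [hd_apply, hones_apply]
        split_ifs <;> omega
    rw [Finset.sum_congr rfl fun j _ => hterm j, Finset.sum_const, Finset.card_univ,
      Fintype.card_fin, nsmul_eq_mul]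
    ring
  · rw [if_neg hno, mul_zero]
    apply Finset.sum_eq_zero
    intro j _
    rw [MvPowerSeries.coeff_mul_monomial]
    split_ifs with hle
    · rw [coeff_substAt]
      split_ifs with hsupp
      · exfalso
        apply hno
        have hni : ∀ i, i ≠ j → n i = 1 := by
          intro i hij
          have h0 : (n - d j) i = 0 := by
            by_contra h0
            have := hsupp (Finsupp.mem_support_iff.mpr h0)
            simp only [Finset.mem_singleton] at this
            exact hij this
          have h1 : d j i ≤ n i := hle i
          rw [Finsupp.tsub_apply] at h0
          rw [hd_apply, if_neg hij] at h0 h1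
          omega
        have hm1 : 0 < m := lt_of_le_of_lt (Nat.zero_le _) j.2
        have hsum : ∑ i : Fin m, n i = n j + ∑ i ∈ Finset.univ.erase j, n i :=
          (Finset.add_sum_erase _ _ (Finset.mem_univ j)).symm
        have herase : ∑ i ∈ Finset.univ.erase j, n i = m - 1 := by
          rw [Finset.sum_congr rfl fun i hi => hni i (Finset.mem_erase.mp hi).1,
            Finset.sum_const, Finset.card_erase_of_mem (Finset.mem_univ j),
            Finset.card_univ, Fintype.card_fin, smul_eq_mul, mul_one]
        have hnj : n j = 1 := by
          rw [hsum, herase] at hn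
          omega
        ext i
        rw [hones_apply]
        by_cases hij : i = j
        · rw [hij]; exact hnj
        · exact hni i hij
      · rw [zero_mul]
    · rfl
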